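/- Let K ≥ 1, let α_1,…,α_K ≥ 0 with Σ_k α_k = 1, let 0 ≤ c < θ̄, and for each k let F_k : ℝ → ℝ be nondecreasing with values in [0,1] such that π_k(p) = (p − c)·(1 − F_k(p)) is concave on [0, θ̄]. Then the expected profit of a uniform price drawn uniformly at random from [c, θ̄] is at least half of the optimal third-degree price-discrimination profit: (1/(θ̄ − c))·∫_c^{θ̄} Σ_k α_k·π_k(p) dp ≥ (1/2)·Σ_k α_k·(sup_{p ∈ [c,θ̄]} π_k(p)). -/

import Mathlib

open intervalIntegral

private lemma ruph_int (c θ : ℝ) (F : ℝ → ℝ) (hFmono : Monotone F)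
    (π : ℝ → ℝ) (hπ : ∀ p, π p = (p - c) * (1 - F p)) :
    IntervalIntegrable π MeasureTheory.volume c θ := by
  have hA : Antitone (fun p => 1 - F p) := fun x y hxy => by
    simp only [sub_le_sub_iff_left]; exact hFmono hxy
  have h := hA.intervalIntegrable (μ := MeasureTheory.volume) (a := c) (b := θ)
  have h2 := h.continuousOn_mul (g := fun p => p - c)
    (by fun_prop)
  have : (fun x => (x - c) * (1 - F x)) = π := by
    funext x; rw [hπ]
  rwa [this] at h2

private lemma ruph_key (c θ : ℝ) (hc : 0 ≤ c) (hcθ : c < θ)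
    (F : ℝ → ℝ) (hF1 : ∀ p, F p ≤ 1) (hFmono : Monotone F)
    (π : ℝ → ℝ) (hπ : ∀ p, π p = (p - c) * (1 - F p))
    (hconc : ConcaveOn ℝ (Set.Icc 0 θ) π)
    (q : ℝ) (hq1 : c ≤ q) (hq2 : q ≤ θ) :
    π q * (θ - c) / 2 ≤ ∫ p in c..θ, π p := by
  have hπc : π c = 0 := by simp [hπ]
  have hπθ : 0 ≤ π θ := by
    rw [hπ]; exact mul_nonneg (by linarith) (by linarith [hF1 θ])
  have hcI : c ∈ Set.Icc (0:ℝ) θ := ⟨hc, hcθ.le⟩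
  have hθI : θ ∈ Set.Icc (0:ℝ) θ := ⟨hc.trans hcθ.le, le_refl θ⟩
  have hqI : q ∈ Set.Icc (0:ℝ) θ := ⟨hc.trans hq1, hq2⟩
  have hIntπ : IntervalIntegrable π MeasureTheory.volume c θ :=
    ruph_int c θ F hFmono π hπ
  have hInt1 : IntervalIntegrable π MeasureTheory.volume c q :=
    hIntπ.mono_set (by
      rw [Set.uIcc_of_le hq1, Set.uIcc_of_le hcθ.le]
      exact Set.Icc_subset_Icc le_rfl hq2)
  have hInt2 : IntervalIntegrable π MeasureTheory.volume q θ :=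
    hIntπ.mono_set (by
      rw [Set.uIcc_of_le hq2, Set.uIcc_of_le hcθ.le]
      exact Set.Icc_subset_Icc hq1 le_rfl)
  -- Piece A : ∫ c..q ≥ π q * (q - c) / 2
  have pieceA : π q * (q - c) / 2 ≤ ∫ p in c..q, π p := by
    rcases eq_or_lt_of_le hq1 with h | h
    · simp [← h]
    · have hqc : 0 < q - c := by linarith
      have hlin : ∀ p ∈ Set.Icc c q, (p - c) / (q - c) * π q ≤ π p := by
        intro p hp
        set b := (p - c) / (q - c) with hb
        have hb0 : 0 ≤ b := div_nonneg (by linarith [hp.1]) hqc.le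
        have hb1 : b ≤ 1 := (div_le_one hqc).2 (by linarith [hp.2])
        have key := hconc.2 hcI hqI (by linarith : (0:ℝ) ≤ 1 - b) hb0 (by ring)
        have hpt : (1 - b) • c + b • q = p := by
          simp only [smul_eq_mul]
          field_simp [hb]
          linarith [show b * (q - c) = p - c from by rw [hb]; exact div_mul_cancel₀ _ hqc.ne']
        rw [hpt, hπc, smul_eq_mul, smul_eq_mul] at key
        linarith
      have hmono := intervalIntegral.integral_mono_on hq1
        (by apply IntervalIntegrable.mul_const; apply IntervalIntegrable.div_const
            exact (intervalIntegrable_id.sub (intervalIntegrable_const)))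
        hInt1 hlin
      have hcalc : (∫ p in c..q, (p - c) / (q - c) * π q) = π q * (q - c) / 2 := by
        have : ∀ p : ℝ, (p - c) / (q - c) * π q = (π q / (q - c)) * (p - c) := by
          intro p; ring
        simp only [this]
        rw [intervalIntegral.integral_const_mul, intervalIntegral.integral_sub
          intervalIntegrable_id intervalIntegrable_const,
          integral_id, integral_const]
        field_simp
        ring
      linarith [hmono, hcalc.symm.le]
  -- Piece B : ∫ q..θ ≥ π q * (θ - q) / 2
  have pieceB : π q * (θ - q) / 2 ≤ ∫ p in q..θ, π p := by
    rcases eq_or_lt_of_le hq2 with h | h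
    · simp [h]
    · have hθq : 0 < θ - q := by linarith
      have hlin : ∀ p ∈ Set.Icc q θ, (θ - p) / (θ - q) * π q ≤ π p := by
        intro p hp
        set a := (θ - p) / (θ - q) with ha
        have ha0 : 0 ≤ a := div_nonneg (by linarith [hp.2]) hθq.le
        have ha1 : a ≤ 1 := (div_le_one hθq).2 (by linarith [hp.1])
        have key := hconc.2 hqI hθI ha0 (by linarith : (0:ℝ) ≤ 1 - a) (by ring)
        have hpt : a • q + (1 - a) • θ = p := by
          simp only [smul_eq_mul]
          field_simp [ha]
          linarith [show a * (θ - q) = θ - p from by rw [ha]; exact div_mul_cancel₀ _ hθq.ne']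
        rw [hpt, smul_eq_mul, smul_eq_mul] at key
        nlinarith [hπθ]
      have hmono := intervalIntegral.integral_mono_on hq2
        (by apply IntervalIntegrable.mul_const; apply IntervalIntegrable.div_const
            exact (intervalIntegrable_const.sub intervalIntegrable_id))
        hInt2 hlin
      have hcalc : (∫ p in q..θ, (θ - p) / (θ - q) * π q) = π q * (θ - q) / 2 := by
        have : ∀ p : ℝ, (θ - p) / (θ - q) * π q = (π q / (θ - q)) * (θ - p) := by
          intro p; ring
        simp only [this]
        rw [intervalIntegral.integral_const_mul, intervalIntegral.integral_sub
          intervalIntegrable_const intervalIntegrable_id,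
          integral_id, integral_const]
        field_simp
        ring
      linarith [hmono, hcalc.symm.le]
  have hsplit : (∫ p in c..q, π p) + (∫ p in q..θ, π p) = ∫ p in c..θ, π p :=
    intervalIntegral.integral_add_adjacent_intervals hInt1 hInt2
  nlinarith [pieceA, pieceB, hsplit]

/-- **Pricing uniformly at random is a half approximation in expectation.**
With concave profit functions `π k p = (p - c) * (1 - F k p)` on the common
support `[0, θ̄]`, the expected aggregate profit of a uniform price drawn
uniformly at random from `[c, θ̄]` is at least half of the optimal third-degree
price-discrimination profit. -/
theorem random_uniform_price_half_approximation
    (K : ℕ) (hK : 1 ≤ K) (α : Fin K → ℝ) (hα : ∀ k, 0 ≤ α k)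
    (hsum : ∑ k, α k = 1)
    (c θ : ℝ) (hc : 0 ≤ c) (hcθ : c < θ)
    (F : Fin K → ℝ → ℝ) (hFmono : ∀ k, Monotone (F k))
    (hF0 : ∀ k p, 0 ≤ F k p) (hF1 : ∀ k p, F k p ≤ 1)
    (π : Fin K → ℝ → ℝ) (hπ : ∀ k p, π k p = (p - c) * (1 - F k p))
    (hconc : ∀ k, ConcaveOn ℝ (Set.Icc 0 θ) (π k)) :
    (1 / (θ - c)) * (∫ p in c..θ, ∑ k, α k * π k p)
      ≥ (1 / 2) * ∑ k, α k * sSup (π k '' Set.Icc c θ) := by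
  have hpos : (0:ℝ) < θ - c := by linarith
  set I : Fin K → ℝ := fun k => ∫ p in c..θ, π k p with hI
  have hIint : ∀ k, IntervalIntegrable (π k) MeasureTheory.volume c θ :=
    fun k => ruph_int c θ (F k) (hFmono k) (π k) (hπ k)
  have hInonneg : ∀ k, 0 ≤ I k := by
    intro k
    apply intervalIntegral.integral_nonneg hcθ.le
    intro p hp
    rw [hπ]
    exact mul_nonneg (by linarith [hp.1]) (by linarith [hF1 k p])
  have hsup : ∀ k, sSup (π k '' Set.Icc c θ) ≤ 2 / (θ - c) * I k := by
    intro k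
    apply Real.sSup_le
    · rintro x ⟨q, hq, rfl⟩
      have key := ruph_key c θ hc hcθ (F k) (hF1 k) (hFmono k) (π k) (hπ k)
        (hconc k) q hq.1 hq.2
      rw [div_mul_eq_mul_div, le_div_iff₀ hpos]
      nlinarith
    · exact mul_nonneg (by positivity) (hInonneg k)
  have hswap : (∫ p in c..θ, ∑ k, α k * π k p) = ∑ k, α k * I k := by
    rw [intervalIntegral.integral_finset_sum]
    · exact Finset.sum_congr rfl fun k _ =>
        intervalIntegral.integral_const_mul _ _
    · intro k _
      exact (hIint k).const_mul _
  have hsum_le : ∑ k, α k * sSup (π k '' Set.Icc c θ)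
      ≤ 2 / (θ - c) * ∑ k, α k * I k := by
    rw [Finset.mul_sum]
    apply Finset.sum_le_sum
    intro k _
    calc α k * sSup (π k '' Set.Icc c θ) ≤ α k * (2 / (θ - c) * I k) :=
          mul_le_mul_of_nonneg_left (hsup k) (hα k)
      _ = 2 / (θ - c) * (α k * I k) := by ring
  rw [ge_iff_le, hswap]
  have h2 : (1/2 : ℝ) * (2 / (θ - c) * ∑ k, α k * I k)
      = 1 / (θ - c) * ∑ k, α k * I k := by ring
  nlinarith [hsum_le]
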